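/- Let N be a nilpotent endomorphism of a finite-dimensional ℂ-vector space V with N^{n+1} = 0. Then there exists a unique increasing filtration 0 ⊆ W_{≤−n} ⊆ W_{≤−n+1} ⊆ … ⊆ W_{≤n} = V such that N(W_{≤p}) ⊆ W_{≤p−2} for all p, and N^p induces an isomorphism Gr^W_p V → Gr^W_{−p} V for all p ≥ 0. -/

import Mathlib

open Submodule LinearMap

/-- The six conditions defining the monodromy weight filtration bounded by `n`. -/
def GoodFilt {V : Type} [AddCommGroup V] [Module ℂ V]
    (n : ℕ) (N : V →ₗ[ℂ] V) (W : ℤ → Submodule ℂ V) : Prop :=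
  Monotone W ∧
  (∀ p : ℤ, p < -(n : ℤ) → W p = ⊥) ∧
  (∀ p : ℤ, (n : ℤ) ≤ p → W p = ⊤) ∧
  (∀ p : ℤ, ∀ x ∈ W p, N x ∈ W (p - 2)) ∧
  (∀ p : ℕ, ∀ y ∈ W (-(p : ℤ)),
    ∃ x ∈ W (p : ℤ), (N ^ p) x - y ∈ W (-(p : ℤ) - 1)) ∧
  (∀ p : ℕ, ∀ x ∈ W (p : ℤ),
    (N ^ p) x ∈ W (-(p : ℤ) - 1) → x ∈ W ((p : ℤ) - 1))

section Helpers

variable {V : Type} [AddCommGroup V] [Module ℂ V] {n : ℕ} {N : V →ₗ[ℂ] V}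
  {W : ℤ → Submodule ℂ V}

lemma iter_mem (h4 : ∀ p : ℤ, ∀ x ∈ W p, N x ∈ W (p - 2)) :
    ∀ (k : ℕ) (p : ℤ), ∀ x ∈ W p, (N ^ k) x ∈ W (p - 2 * k) := by
  intro k
  induction k with
  | zero => intro p x hx; simpa using hx
  | succ k ihk =>
    intro p x hx
    have h := h4 _ _ (ihk p x hx)
    have e : p - 2 * (k : ℤ) - 2 = p - 2 * ((k : ℤ) + 1) := by ring
    rw [e] at h
    rw [pow_succ']
    push_cast
    simpa using h

lemma GoodFilt.ker_eq (h : GoodFilt n N W) : W ((n : ℤ) - 1) = LinearMap.ker (N ^ n) := by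
  obtain ⟨h1, h2, h3, h4, h5, h6⟩ := h
  apply le_antisymm
  · intro x hx
    have hh := iter_mem h4 n _ x hx
    have e : (n : ℤ) - 1 - 2 * n = -(n : ℤ) - 1 := by ring
    rw [e, h2 _ (by omega)] at hh
    simpa using hh
  · intro x hx
    rw [LinearMap.mem_ker] at hx
    exact h6 n x (by rw [h3 _ le_rfl]; trivial) (by rw [hx]; exact zero_mem _)

lemma GoodFilt.range_eq (h : GoodFilt n N W) : W (-(n : ℤ)) = LinearMap.range (N ^ n) := by
  obtain ⟨h1, h2, h3, h4, h5, h6⟩ := h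
  apply le_antisymm
  · intro y hy
    obtain ⟨x, _, hxy⟩ := h5 n y hy
    rw [h2 _ (by omega)] at hxy
    exact ⟨x, sub_eq_zero.mp ((Submodule.mem_bot ℂ).mp hxy)⟩
  · rintro _ ⟨x, rfl⟩
    have hh := iter_mem h4 n (n : ℤ) x (by rw [h3 _ le_rfl]; trivial)
    have e : (n : ℤ) - 2 * n = -(n : ℤ) := by ring
    rwa [e] at hh

lemma mem_map_subtype_comap {K : Submodule ℂ V} {J : Submodule ℂ K} {U : Submodule ℂ (K ⧸ J)}
    {x : V} :
    x ∈ Submodule.map K.subtype (U.comap J.mkQ) ↔ ∃ hx : x ∈ K, J.mkQ ⟨x, hx⟩ ∈ U := by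
  constructor
  · rintro ⟨⟨y, hyK⟩, hyU, rfl⟩; exact ⟨hyK, hyU⟩
  · rintro ⟨hx, hU⟩; exact ⟨⟨x, hx⟩, hU, rfl⟩

lemma coe_pow_restrict {K : Submodule ℂ V} (hNK : ∀ x ∈ K, N x ∈ K) (k : ℕ) (x : K) :
    (((N.restrict hNK) ^ k) x : V) = (N ^ k) (x : V) := by
  induction k with
  | zero => simp
  | succ k ihk =>
    rw [pow_succ', pow_succ', Module.End.mul_apply, Module.End.mul_apply,
      LinearMap.restrict_coe_apply, ihk]

lemma pow_mapQ {K : Submodule ℂ V} {J : Submodule ℂ K} (Nr : K →ₗ[ℂ] K)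
    (h : J ≤ J.comap Nr) (k : ℕ) (x : K) :
    ((Submodule.mapQ J J Nr h) ^ k) (J.mkQ x) = J.mkQ ((Nr ^ k) x) := by
  induction k generalizing x with
  | zero => simp
  | succ k ihk =>
    rw [pow_succ', pow_succ', Module.End.mul_apply, Module.End.mul_apply, ihk,
      Submodule.mkQ_apply, Submodule.mapQ_apply, Submodule.mkQ_apply]

end Helpers

theorem weight_aux :
    ∀ (n : ℕ) (V : Type) [AddCommGroup V] [Module ℂ V] (N : V →ₗ[ℂ] V),
      N ^ (n + 1) = 0 → ∃! W : ℤ → Submodule ℂ V, GoodFilt n N W := by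
  intro n
  induction n with
  | zero =>
    intro V _ _ N hN
    have hN0 : N = 0 := by simpa using hN
    refine ⟨fun p => if p < 0 then ⊥ else ⊤, ⟨?_, ?_, ?_, ?_, ?_, ?_⟩, ?_⟩
    · intro p q hpq
      dsimp only
      split_ifs with h h'
      · exact le_rfl
      · exact bot_le
      · omega
      · exact le_rfl
    · intro p hp; simp only; rw [if_pos (by push_cast at hp; omega)]
    · intro p hp; simp only; rw [if_neg (by push_cast at hp; omega)]
    · intro p x _
      have : N x = 0 := by rw [hN0]; rfl
      dsimp only
      rw [this]; exact zero_mem _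
    · intro p y hy
      simp only at hy ⊢
      match p with
      | 0 => exact ⟨y, by simpa using hy, by simp⟩
      | (p+1) =>
        rw [if_pos (by push_cast; omega)] at hy
        have hy0 : y = 0 := by simpa using hy
        refine ⟨0, by rw [if_neg (by push_cast; omega)]; trivial, ?_⟩
        rw [hy0]
        simpa using zero_mem _
    · intro p x hx hxp
      simp only at hx hxp ⊢
      match p with
      | 0 => simpa using hxp
      | (p+1) => rw [if_neg (by push_cast; omega)]; trivial
    · rintro W₂ ⟨m1, h2, h3, h4, h5, h6⟩
      funext p
      show W₂ p = if p < 0 then ⊥ else ⊤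
      by_cases hp : p < 0
      · rw [h2 p (by push_cast; omega), if_pos hp]
      · rw [h3 p (by push_cast; omega), if_neg hp]
  | succ n ih =>
    intro V _ _ N hN
    set m : ℕ := n + 1 with hm
    set K : Submodule ℂ V := LinearMap.ker (N ^ m) with hK
    set I : Submodule ℂ V := LinearMap.range (N ^ m) with hI
    have hNpow : ∀ (k : ℕ) (x : V), m + 1 ≤ k → (N ^ k) x = 0 := by
      intro k x hk
      have : N ^ k = N ^ (m + 1) * N ^ (k - (m + 1)) := by
        rw [← pow_add]; congr 1; omega
      rw [this, hN]; simp
    have hIK : I ≤ K := by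
      rintro _ ⟨x, rfl⟩
      simp only [hK, LinearMap.mem_ker]
      rw [← Module.End.mul_apply, ← pow_add]
      exact hNpow _ _ (by omega)
    have hNK : ∀ x ∈ K, N x ∈ K := by
      intro x hx
      simp only [hK, LinearMap.mem_ker] at hx ⊢
      rw [← Module.End.mul_apply, ← pow_succ]
      exact hNpow _ _ le_rfl
    set Nr : K →ₗ[ℂ] K := N.restrict hNK with hNr
    set J : Submodule ℂ K := I.comap K.subtype with hJ
    have hNrJ : J ≤ J.comap Nr := by
      rintro x hx
      simp only [hJ, Submodule.mem_comap, Submodule.coe_subtype] at hx ⊢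
      rw [hNr, LinearMap.restrict_coe_apply]
      obtain ⟨y, hy⟩ := hx
      refine ⟨N y, ?_⟩
      rw [← hy, ← Module.End.mul_apply, ← pow_succ, ← Module.End.mul_apply, ← pow_succ']
    set N' : (K ⧸ J) →ₗ[ℂ] (K ⧸ J) := Submodule.mapQ J J Nr hNrJ with hN'def
    have hpowcoe : ∀ (k : ℕ) (x : K), ((Nr ^ k) x : V) = (N ^ k) (x : V) :=
      coe_pow_restrict hNK
    have hpowQ : ∀ (k : ℕ) (x : K), (N' ^ k) (J.mkQ x) = J.mkQ ((Nr ^ k) x) :=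
      pow_mapQ Nr hNrJ
    have hN' : N' ^ (n + 1) = 0 := by
      apply LinearMap.ext
      intro q
      obtain ⟨x, rfl⟩ := Submodule.Quotient.mk_surjective _ q
      rw [← Submodule.mkQ_apply, hpowQ]
      have hx0 : (Nr ^ (n + 1)) x = 0 := by
        apply Subtype.ext
        rw [hpowcoe]
        simpa [hK, LinearMap.mem_ker] using x.2
      rw [hx0]
      simp
    obtain ⟨W', hW'g, hW'uniq⟩ := ih (K ⧸ J) N' hN'
    obtain ⟨w1, w2, w3, w4, w5, w6⟩ := id hW'g
    set Wc : ℤ → Submodule ℂ V := fun p => Submodule.map K.subtype ((W' p).comap J.mkQ)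
      with hWc
    have WcMono : ∀ p q : ℤ, p ≤ q → Wc p ≤ Wc q := fun p q hpq =>
      Submodule.map_mono (Submodule.comap_mono (w1 hpq))
    have memWc : ∀ (p : ℤ) (x : V), x ∈ Wc p ↔ ∃ hx : x ∈ K, J.mkQ ⟨x, hx⟩ ∈ W' p := by
      intro p x; exact mem_map_subtype_comap
    have WcK : ∀ p : ℤ, (n : ℤ) ≤ p → Wc p = K := by
      intro p hp
      simp only [hWc]
      rw [w3 p hp, Submodule.comap_top, Submodule.map_subtype_top]
    have WcI : ∀ p : ℤ, p < -(n : ℤ) → Wc p = I := by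
      intro p hp
      simp only [hWc]
      rw [w2 p hp]
      have hbq : (⊥ : Submodule ℂ (K ⧸ J)).comap J.mkQ = J := by
        rw [Submodule.comap_bot, Submodule.ker_mkQ]
      rw [hbq, hJ, Submodule.map_comap_subtype, inf_eq_right.mpr hIK]
    set W : ℤ → Submodule ℂ V := fun p =>
      if p < -(m : ℤ) then ⊥ else if (m : ℤ) ≤ p then ⊤ else Wc p with hW
    have Wbot : ∀ p : ℤ, p < -(m : ℤ) → W p = ⊥ := fun p hp => by
      simp only [hW]; rw [if_pos hp]
    have Wtop : ∀ p : ℤ, (m : ℤ) ≤ p → W p = ⊤ := fun p hp => by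
      simp only [hW]; rw [if_neg (by omega), if_pos hp]
    have Wmid : ∀ p : ℤ, -(m : ℤ) ≤ p → p < (m : ℤ) → W p = Wc p := fun p h1 h2 => by
      simp only [hW]; rw [if_neg (by omega), if_neg (by omega)]
    refine ⟨W, ⟨?_, ?_, ?_, ?_, ?_, ?_⟩, ?_⟩
    -- monotone
    · intro p q hpq
      simp only [hW]
      split_ifs
      all_goals first
        | exact le_rfl | exact bot_le | exact le_top | omega
        | exact WcMono _ _ hpq
    -- bottom
    · intro p hp; exact Wbot p (by push_cast at hp ⊢; omega)
    -- top
    · intro p hp; exact Wtop p (by push_cast at hp ⊢; omega)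
    -- N-stability
    · intro p x hx
      rcases lt_or_ge p (-(m : ℤ)) with hp | hp
      · rw [Wbot p hp] at hx
        have hx0 : x = 0 := by simpa using hx
        rw [hx0, map_zero]; exact zero_mem _
      · rcases le_or_gt (m : ℤ) p with hp2 | hp2
        · rcases le_or_gt (m : ℤ) (p - 2) with hq | hq
          · rw [Wtop _ hq]; trivial
          · rw [Wmid _ (by omega) hq]
            have hNxK : N x ∈ K := by
              simp only [hK, LinearMap.mem_ker]
              rw [← Module.End.mul_apply, ← pow_succ]
              exact hNpow _ _ (by omega)
            have base : N x ∈ Wc ((n : ℤ) - 1) := by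
              rw [memWc]
              refine ⟨hNxK, ?_⟩
              rw [GoodFilt.ker_eq hW'g, LinearMap.mem_ker, hpowQ,
                Submodule.mkQ_apply, Submodule.Quotient.mk_eq_zero]
              simp only [hJ, Submodule.mem_comap, Submodule.coe_subtype]
              rw [hpowcoe]
              refine ⟨x, ?_⟩
              simp only
              rw [← Module.End.mul_apply, ← pow_succ]
            exact WcMono _ _ (by omega) base
        · rw [Wmid p (by omega) hp2, memWc] at hx
          obtain ⟨hxK, hx'⟩ := hx
          rcases (by omega : p = -(m : ℤ) ∨ p = -(n : ℤ) ∨ -(n : ℤ) + 1 ≤ p) with hp3 | hp3 | hp3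
          · have hxI : x ∈ I := by
              rw [← WcI p (by omega), memWc]; exact ⟨hxK, hx'⟩
            obtain ⟨y, hy⟩ := hxI
            have hx0 : N x = 0 := by
              rw [← hy, ← Module.End.mul_apply, ← pow_succ']
              exact hNpow _ _ (by omega)
            rw [hx0]; exact zero_mem _
          · -- p = -n : show N x = 0
            have hx'' := hx'
            rw [hp3] at hx''
            rw [GoodFilt.range_eq hW'g] at hx''
            obtain ⟨q, hq⟩ := hx''
            obtain ⟨y, rfl⟩ := Submodule.Quotient.mk_surjective _ q
            rw [← Submodule.mkQ_apply, hpowQ] at hq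
            have hd : ((Nr ^ n) y : V) - x ∈ I := by
              have h1 := (Submodule.Quotient.eq J).mp hq
              simpa only [hJ, Submodule.mem_comap, Submodule.coe_subtype,
                AddSubgroupClass.coe_sub] using h1
            obtain ⟨z, hz⟩ := hd
            have hx0 : N x = 0 := by
              have hxe : x = (N ^ n) (y : V) - (N ^ m) z := by
                rw [← hpowcoe, hz]
                abel
              rw [hxe, map_sub]
              have h1 : N ((N ^ n) (y : V)) = 0 := by
                rw [← Module.End.mul_apply, ← pow_succ']
                have hyK2 : (y : V) ∈ K := y.2
                simp only [hK, LinearMap.mem_ker] at hyK2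
                exact hyK2
              have h2 : N ((N ^ m) z) = 0 := by
                rw [← Module.End.mul_apply, ← pow_succ']
                exact hNpow _ _ (by omega)
              rw [h1, h2, sub_zero]
            rw [hx0]; exact zero_mem _
          · rw [Wmid _ (by omega) (by omega), memWc]
            have hNxK : N x ∈ K := hNK x hxK
            refine ⟨hNxK, ?_⟩
            have hw := w4 p _ hx'
            rw [hN'def, Submodule.mkQ_apply, Submodule.mapQ_apply] at hw
            have he : Nr ⟨x, hxK⟩ = ⟨N x, hNxK⟩ := by
              apply Subtype.ext
              rw [hNr, LinearMap.restrict_coe_apply]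
            rw [Submodule.mkQ_apply, ← he]
            exact hw
    -- surjectivity on graded pieces
    · intro p y hy
      rcases (by omega : m + 1 ≤ p ∨ p = m ∨ p ≤ n) with hp | hp | hp
      · rw [Wbot _ (by push_cast; omega)] at hy
        have hy0 : y = 0 := by simpa using hy
        refine ⟨0, by rw [Wtop _ (by push_cast; omega)]; trivial, ?_⟩
        rw [hy0]
        simpa using zero_mem _
      · subst hp
        rw [Wmid _ (by omega) (by push_cast; omega), WcI _ (by push_cast; omega)] at hy
        obtain ⟨x, hx⟩ := hy
        refine ⟨x, by rw [Wtop _ (by push_cast; omega)]; trivial, ?_⟩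
        rw [hx, sub_self]; exact zero_mem _
      · rw [Wmid _ (by push_cast; omega) (by push_cast; omega), memWc] at hy
        obtain ⟨hyK, hy'⟩ := hy
        obtain ⟨x', hx'W, hx'd⟩ := w5 p _ hy'
        obtain ⟨x, rfl⟩ := Submodule.Quotient.mk_surjective _ x'
        rw [← Submodule.mkQ_apply] at hx'W hx'd
        refine ⟨(x : V), ?_, ?_⟩
        · rw [Wmid _ (by push_cast; omega) (by push_cast; omega), memWc]
          exact ⟨x.2, hx'W⟩
        · rw [Wmid _ (by push_cast; omega) (by push_cast; omega), memWc]
          have hK1 : (N ^ p) (x : V) - y ∈ K := by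
            refine sub_mem ?_ hyK
            rw [← hpowcoe]
            exact ((Nr ^ p) x).2
          refine ⟨hK1, ?_⟩
          have he : J.mkQ ⟨(N ^ p) (x : V) - y, hK1⟩ =
              (N' ^ p) (J.mkQ x) - J.mkQ ⟨y, hyK⟩ := by
            rw [hpowQ, ← map_sub]
            congr 1
            apply Subtype.ext
            simp [hpowcoe]
          rw [he]
          exact hx'd
    -- injectivity on graded pieces
    · intro p x hxW hxN
      rcases (by omega : m + 1 ≤ p ∨ p = m ∨ p ≤ n) with hp | hp | hp
      · rw [Wtop _ (by push_cast; omega)]; trivial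
      · subst hp
        rw [Wbot _ (by push_cast; omega)] at hxN
        have hxK : x ∈ K := by
          simp only [hK, LinearMap.mem_ker]
          simpa using hxN
        rw [Wmid _ (by push_cast; omega) (by push_cast; omega), memWc]
        refine ⟨hxK, ?_⟩
        rw [w3 _ (by push_cast; omega)]; trivial
      · rw [Wmid _ (by push_cast; omega) (by push_cast; omega), memWc] at hxW
        obtain ⟨hxK, hx'⟩ := hxW
        rw [Wmid _ (by push_cast; omega) (by push_cast; omega), memWc] at hxN
        obtain ⟨hK2, hq⟩ := hxN
        have hmem : (N' ^ p) (J.mkQ ⟨x, hxK⟩) ∈ W' (-(p : ℤ) - 1) := by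
          rw [hpowQ]
          have he : (Nr ^ p) ⟨x, hxK⟩ = ⟨(N ^ p) x, hK2⟩ := by
            apply Subtype.ext; rw [hpowcoe]
          rw [he]
          exact hq
        have := w6 p _ hx' hmem
        rw [Wmid _ (by push_cast; omega) (by push_cast; omega), memWc]
        exact ⟨hxK, this⟩
    -- uniqueness
    · intro W₂ hG
      obtain ⟨g1, g2, g3, g4, g5, g6⟩ := id hG
      have hK2 : W₂ ((m : ℤ) - 1) = K := by rw [GoodFilt.ker_eq hG, hK]
      have hI2 : W₂ (-(m : ℤ)) = I := by rw [GoodFilt.range_eq hG, hI]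
      have hW₂leK : ∀ p : ℤ, p ≤ (m : ℤ) - 1 → W₂ p ≤ K := fun p hp =>
        hK2 ▸ g1 hp
      have hIleW₂ : ∀ p : ℤ, -(m : ℤ) ≤ p → I ≤ W₂ p := fun p hp =>
        hI2 ▸ g1 hp
      set W₂' : ℤ → Submodule ℂ (K ⧸ J) :=
        fun p => Submodule.map J.mkQ ((W₂ p).comap K.subtype) with hW₂'
      have g'1 : Monotone W₂' := fun p q hpq =>
        Submodule.map_mono (Submodule.comap_mono (g1 hpq))
      have memW₂' : ∀ (p : ℤ) (q : K ⧸ J), q ∈ W₂' p ↔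
          ∃ z : K, (z : V) ∈ W₂ p ∧ J.mkQ z = q := by
        intro p q
        simp only [hW₂']
        constructor
        · rintro ⟨z, hz, rfl⟩
          exact ⟨z, hz, rfl⟩
        · rintro ⟨z, hz, rfl⟩
          exact Submodule.mem_map_of_mem hz
      have g'2 : ∀ p : ℤ, p < -(n : ℤ) → W₂' p = ⊥ := by
        intro p hp
        rw [eq_bot_iff]
        rintro q hq
        rw [memW₂'] at hq
        obtain ⟨z, hz, rfl⟩ := hq
        have hzI : (z : V) ∈ I := by
          rw [← hI2]
          exact g1 (show p ≤ -(m : ℤ) by omega) hz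
        have hzJ : z ∈ J := hzI
        rw [Submodule.mem_bot, Submodule.mkQ_apply, Submodule.Quotient.mk_eq_zero]
        exact hzJ
      have g'3 : ∀ p : ℤ, (n : ℤ) ≤ p → W₂' p = ⊤ := by
        intro p hp
        rw [eq_top_iff]
        rintro q _
        obtain ⟨z, rfl⟩ := Submodule.Quotient.mk_surjective _ q
        refine (memW₂' p _).mpr ⟨z, ?_, rfl⟩
        have hzK : (z : V) ∈ W₂ ((m : ℤ) - 1) := by rw [hK2]; exact z.2
        exact g1 (show (m : ℤ) - 1 ≤ p by omega) hzK
      have hN'app : ∀ z : K, N' (J.mkQ z) = J.mkQ (Nr z) := by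
        intro z
        rw [hN'def, Submodule.mkQ_apply, Submodule.mapQ_apply, Submodule.mkQ_apply]
      have g'4 : ∀ p : ℤ, ∀ x' ∈ W₂' p, N' x' ∈ W₂' (p - 2) := by
        intro p x' hx'
        rw [memW₂'] at hx'
        obtain ⟨z, hz, rfl⟩ := hx'
        rw [hN'app, memW₂']
        refine ⟨Nr z, ?_, rfl⟩
        have : (Nr z : V) = N (z : V) := by rw [hNr, LinearMap.restrict_coe_apply]
        rw [this]
        exact g4 p _ hz
      have g'5 : ∀ p : ℕ, ∀ y' ∈ W₂' (-(p : ℤ)),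
          ∃ x' ∈ W₂' (p : ℤ), (N' ^ p) x' - y' ∈ W₂' (-(p : ℤ) - 1) := by
        intro p y' hy'
        rcases (by omega : n + 1 ≤ p ∨ p ≤ n) with hp | hp
        · rw [g'2 _ (by push_cast; omega)] at hy'
          have hy0 : y' = 0 := by simpa using hy'
          refine ⟨0, zero_mem _, ?_⟩
          rw [hy0]
          simpa using zero_mem _
        · rw [memW₂'] at hy'
          obtain ⟨z, hz, rfl⟩ := hy'
          obtain ⟨x, hxW, hxd⟩ := g5 p _ hz
          have hxK : x ∈ K := hW₂leK _ (by push_cast; omega) hxW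
          refine ⟨J.mkQ ⟨x, hxK⟩, ?_, ?_⟩
          · rw [memW₂']
            exact ⟨⟨x, hxK⟩, hxW, rfl⟩
          · rw [hpowQ, ← map_sub, memW₂']
            refine ⟨(Nr ^ p) ⟨x, hxK⟩ - z, ?_, rfl⟩
            have hcoe : (((Nr ^ p) ⟨x, hxK⟩ - z : K) : V) = (N ^ p) x - (z : V) := by
              rw [AddSubgroupClass.coe_sub, hpowcoe]
            rw [hcoe]
            exact hxd
      have g'6 : ∀ p : ℕ, ∀ x' ∈ W₂' (p : ℤ),
          (N' ^ p) x' ∈ W₂' (-(p : ℤ) - 1) → x' ∈ W₂' ((p : ℤ) - 1) := by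
        intro p x' hx' hNx'
        rcases (by omega : n + 1 ≤ p ∨ p ≤ n) with hp | hp
        · rw [g'3 _ (by push_cast; omega)]; trivial
        · rw [memW₂'] at hx'
          obtain ⟨z, hz, rfl⟩ := hx'
          rw [hpowQ, memW₂'] at hNx'
          obtain ⟨u, hu, huq⟩ := hNx'
          have h1 : u - (Nr ^ p) z ∈ J := by
            rw [← Submodule.ker_mkQ J, LinearMap.mem_ker, map_sub, huq, sub_self]
          have h2 : (u : V) - (N ^ p) (z : V) ∈ I := by
            have h1' : ((u - (Nr ^ p) z : K) : V) ∈ I := h1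
            rwa [AddSubgroupClass.coe_sub, hpowcoe] at h1'
          have h3 : (N ^ p) (z : V) ∈ W₂ (-(p : ℤ) - 1) := by
            have hIle : I ≤ W₂ (-(p : ℤ) - 1) := hIleW₂ _ (by push_cast; omega)
            have h4 := sub_mem hu (hIle h2)
            simpa using h4
          have h5 := g6 p _ hz h3
          rw [memW₂']
          exact ⟨z, h5, rfl⟩
      have hEq : W₂' = W' := hW'uniq W₂' ⟨g'1, g'2, g'3, g'4, g'5, g'6⟩
      funext p
      rcases lt_or_ge p (-(m : ℤ)) with hp | hp
      · rw [g2 p hp, Wbot p hp]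
      · rcases le_or_gt (m : ℤ) p with hp2 | hp2
        · rw [g3 p hp2, Wtop p hp2]
        · rw [Wmid p hp hp2]
          simp only [hWc]
          rw [← hEq]
          simp only [hW₂']
          rw [Submodule.comap_map_eq, Submodule.ker_mkQ]
          have hJle : J ≤ (W₂ p).comap K.subtype := by
            intro z hz
            simp only [Submodule.mem_comap, Submodule.coe_subtype]
            exact hIleW₂ p (by omega)
              (by simpa only [hJ, Submodule.mem_comap, Submodule.coe_subtype] using hz)
          rw [sup_eq_left.mpr hJle, Submodule.map_comap_subtype]
          exact (inf_eq_right.mpr (hW₂leK p (by omega))).symm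

/-- Existence and uniqueness of the monodromy weight filtration (centered at `0`) of a
nilpotent endomorphism `N` with `N^{n+1} = 0`: a unique increasing filtration `W` with
`W_{≤p} = 0` for `p < -n`, `W_{≤p} = V` for `p ≥ n`, `N(W_{≤p}) ⊆ W_{≤p-2}`, and such that
`N^p` induces an isomorphism `Gr_p → Gr_{-p}` for all `p ≥ 0` (stated elementwise). -/
theorem stmt4 {V : Type} [AddCommGroup V] [Module ℂ V] [FiniteDimensional ℂ V]
    (n : ℕ) (N : V →ₗ[ℂ] V) (hN : N ^ (n + 1) = 0) :
    ∃! W : ℤ → Submodule ℂ V,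
      Monotone W ∧
      (∀ p : ℤ, p < -(n : ℤ) → W p = ⊥) ∧
      (∀ p : ℤ, (n : ℤ) ≤ p → W p = ⊤) ∧
      (∀ p : ℤ, ∀ x ∈ W p, N x ∈ W (p - 2)) ∧
      (∀ p : ℕ, ∀ y ∈ W (-(p : ℤ)),
        ∃ x ∈ W (p : ℤ), (N ^ p) x - y ∈ W (-(p : ℤ) - 1)) ∧
      (∀ p : ℕ, ∀ x ∈ W (p : ℤ),
        (N ^ p) x ∈ W (-(p : ℤ) - 1) → x ∈ W ((p : ℤ) - 1)) := by
  exact weight_aux n V N hN
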